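/- Let G be a connected graph with a peripheral leaf ℓ, i.e., a leaf whose unique neighbor u has degree 2 in G. Then sdim(G − ℓ) = sdim(G). -/

import Mathlib

open SimpleGraph

/-- One step of the zero forcing color-change rule: add every white vertex that is
the unique white neighbor of some black vertex. -/
def zfStep {V : Type*} (G : SimpleGraph V) (B : Set V) : Set V :=
  B ∪ {w | ∃ u ∈ B, G.Adj u w ∧ ∀ x, G.Adj u x → x ∉ B → x = w}

/-- `S` is a zero forcing set if iterating the color-change rule blackens all vertices. -/
def IsZeroForcingSet {V : Type*} (G : SimpleGraph V) (S : Set V) : Prop :=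
  ∃ n : ℕ, (zfStep G)^[n] S = Set.univ

/-- The zero forcing number: minimum cardinality of a zero forcing set. -/
noncomputable def zeroForcingNumber {V : Type*} (G : SimpleGraph V) : ℕ :=
  sInf {n | ∃ S : Set V, S.ncard = n ∧ IsZeroForcingSet G S}

/-- A (finite) graph is a path graph: nonempty, connected, acyclic, max degree ≤ 2. -/
def IsPathGraph {V : Type*} (G : SimpleGraph V) : Prop :=
  Nonempty V ∧ G.Connected ∧ G.IsAcyclic ∧ ∀ v : V, (G.neighborSet v).ncard ≤ 2

/-- The path cover number: minimum number of vertex-disjoint induced paths covering `V`. -/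
noncomputable def pathCoverNumber {V : Type*} (G : SimpleGraph V) : ℕ :=
  sInf {n | ∃ P : Finset (Set V), P.card = n ∧
    (∀ S ∈ P, IsPathGraph (G.induce S)) ∧
    (P : Set (Set V)).PairwiseDisjoint id ∧ ⋃₀ (P : Set (Set V)) = Set.univ}

/-- `u` lies on an `x`–`v` geodesic. -/
def LiesBetween {V : Type*} (G : SimpleGraph V) (x u v : V) : Prop :=
  G.dist x u + G.dist u v = G.dist x v

/-- `x` strongly resolves the pair `u, v`. -/
def StronglyResolves {V : Type*} (G : SimpleGraph V) (x u v : V) : Prop :=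
  LiesBetween G x u v ∨ LiesBetween G x v u

/-- `W` is a strong resolving set of `G`. -/
def IsStrongResolvingSet {V : Type*} (G : SimpleGraph V) (W : Set V) : Prop :=
  ∀ u v : V, u ≠ v → ∃ x ∈ W, StronglyResolves G x u v

/-- The strong metric dimension: minimum cardinality of a strong resolving set. -/
noncomputable def sdim {V : Type*} (G : SimpleGraph V) : ℕ :=
  sInf {n | ∃ W : Set V, W.ncard = n ∧ IsStrongResolvingSet G W}

/-- A leaf is a vertex of degree one. -/
def IsLeaf {V : Type*} (G : SimpleGraph V) (v : V) : Prop :=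
  (G.neighborSet v).ncard = 1

/-- `σ(G)`: the number of leaves of `G`. -/
noncomputable def leafCount {V : Type*} (G : SimpleGraph V) : ℕ :=
  {v | IsLeaf G v}.ncard

namespace PLaux

variable {V : Type*}

/-- maximally distant -/
def MaxDist (G : SimpleGraph V) (a b : V) : Prop :=
  ∀ c, G.Adj a c → G.dist c b ≤ G.dist a b

lemma walk_avoid {G : SimpleGraph V} {l u : V} (hl : G.neighborSet l = {u}) :
    ∀ n {a b : V} (p : G.Walk a b), p.length ≤ n → a ≠ l → b ≠ l →
      ∃ q : G.Walk a b, q.length ≤ p.length ∧ ∀ x ∈ q.support, x ≠ l := by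
  intro n
  induction n with
  | zero =>
    intro a b p hp ha hb
    have : p.length = 0 := Nat.le_zero.mp hp
    have hab : a = b := SimpleGraph.Walk.eq_of_length_eq_zero this
    subst hab
    exact ⟨SimpleGraph.Walk.nil, by simp, by simp [ha]⟩
  | succ n ih =>
    intro a b p hp ha hb
    cases p with
    | nil => exact ⟨SimpleGraph.Walk.nil, by simp, by simp [ha]⟩
    | @cons _ c _ h p' =>
      by_cases hc : c = l
      · have hau : a = u := by
          have h2 : a ∈ G.neighborSet l := by
            rw [SimpleGraph.mem_neighborSet]; exact (hc ▸ h).symm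
          rw [hl] at h2; exact h2
        have hcb : c ≠ b := fun hh => hb (hc ▸ hh.symm ▸ rfl)
        obtain ⟨d, hd, p'', rfl⟩ := SimpleGraph.Walk.exists_eq_cons_of_ne hcb p'
        have hdu : d = u := by
          have h2 : d ∈ G.neighborSet l := hc ▸ hd
          rw [hl] at h2; exact h2
        have hda : d = a := hdu.trans hau.symm
        have hlen : p''.length ≤ n := by
          simp only [SimpleGraph.Walk.length_cons] at hp; omega
        obtain ⟨q, hq1, hq2⟩ := ih (p''.copy hda rfl) (by simpa using hlen) ha hb
        refine ⟨q, ?_, hq2⟩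
        simp only [SimpleGraph.Walk.length_copy] at hq1
        simp only [SimpleGraph.Walk.length_cons]; omega
      · have hlen : p'.length ≤ n := by
          simp only [SimpleGraph.Walk.length_cons] at hp; omega
        obtain ⟨q, hq1, hq2⟩ := ih p' hlen hc hb
        refine ⟨SimpleGraph.Walk.cons h q, by simp [hq1], ?_⟩
        intro x hx
        rw [SimpleGraph.Walk.support_cons, List.mem_cons] at hx
        rcases hx with rfl | hx
        · exact ha
        · exact hq2 x hx

lemma walk_lift {G : SimpleGraph V} {s : Set V} :
    ∀ {a b : V} (p : G.Walk a b) (ha : a ∈ s) (hb : b ∈ s), (∀ x ∈ p.support, x ∈ s) →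
      ∃ q : (G.induce s).Walk ⟨a, ha⟩ ⟨b, hb⟩, q.length = p.length := by
  intro a b p
  induction p with
  | nil => intro ha hb _; exact ⟨SimpleGraph.Walk.nil, rfl⟩
  | @cons x y z h p ih =>
    intro ha hb hs
    have hy : y ∈ s := hs y (by simp [SimpleGraph.Walk.support_cons])
    obtain ⟨q, hq⟩ := ih hy hb (fun t ht => hs t (by rw [SimpleGraph.Walk.support_cons]; exact List.mem_cons_of_mem _ ht))
    refine ⟨SimpleGraph.Walk.cons (by simpa using h) q, by simp [hq]⟩

end PLaux

namespace PL2
open PLaux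

variable {V : Type*} {G : SimpleGraph V} {l u : V}

lemma adj_of_leaf (hl : G.neighborSet l = {u}) : G.Adj l u := by
  rw [← SimpleGraph.mem_neighborSet, hl]; rfl

lemma eq_u_of_adj_l (hl : G.neighborSet l = {u}) {c : V} (h : G.Adj l c) : c = u := by
  have h2 : c ∈ G.neighborSet l := h
  rw [hl] at h2; exact h2

lemma connected_induce (hG : G.Connected) (hl : G.neighborSet l = {u}) (hul : u ≠ l) :
    (G.induce {x : V | x ≠ l}).Connected := by
  rw [SimpleGraph.connected_iff]
  constructor
  · intro a b
    obtain ⟨p⟩ := hG a.1 b.1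
    obtain ⟨q, _, hq2⟩ := walk_avoid hl p.length p le_rfl a.2 b.2
    obtain ⟨r, _⟩ := walk_lift q a.2 b.2 hq2
    exact ⟨r⟩
  · exact ⟨⟨u, hul⟩⟩

lemma dist_induce (hG : G.Connected) (hl : G.neighborSet l = {u})
    (a b : ↥{x : V | x ≠ l}) :
    (G.induce {x : V | x ≠ l}).dist a b = G.dist a.1 b.1 := by
  obtain ⟨p, hp⟩ := (hG a.1 b.1).exists_walk_length_eq_dist
  obtain ⟨q, hq1, hq2⟩ := walk_avoid hl p.length p le_rfl a.2 b.2
  obtain ⟨r, hr⟩ := walk_lift q a.2 b.2 hq2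
  apply le_antisymm
  · calc (G.induce {x : V | x ≠ l}).dist a b ≤ r.length := SimpleGraph.dist_le r
    _ = q.length := hr
    _ ≤ p.length := hq1
    _ = G.dist a.1 b.1 := hp
  · have hreach : (G.induce {x : V | x ≠ l}).Reachable a b := ⟨r⟩
    obtain ⟨m, hm⟩ := hreach.exists_walk_length_eq_dist
    have := SimpleGraph.dist_le (m.map (SimpleGraph.Embedding.induce {x : V | x ≠ l}).toHom)
    rw [SimpleGraph.Walk.length_map, hm] at this
    exact this

lemma dist_leaf (hG : G.Connected) (hl : G.neighborSet l = {u}) {a : V} (ha : a ≠ l) :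
    G.dist l a = G.dist u a + 1 := by
  have hadj : G.Adj l u := adj_of_leaf hl
  apply le_antisymm
  · have h1 : G.dist l u = 1 := SimpleGraph.dist_eq_one_iff_adj.mpr hadj
    have := hG.dist_triangle (u := l) (v := u) (w := a)
    omega
  · obtain ⟨p, hp⟩ := (hG l a).exists_walk_length_eq_dist
    have hla : l ≠ a := fun h => ha h.symm
    obtain ⟨c, hc, q, rfl⟩ := SimpleGraph.Walk.exists_eq_cons_of_ne hla p
    have hcu : c = u := eq_u_of_adj_l hl hc
    have h2 : G.dist u a ≤ q.length := hcu ▸ SimpleGraph.dist_le q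
    rw [SimpleGraph.Walk.length_cons] at hp
    omega

lemma dist_mid {w : V} (hG : G.Connected) (hl : G.neighborSet l = {u})
    (hnbru : G.neighborSet u = {l, w})
    {a : V} (ha : a ≠ l) (hau : a ≠ u) :
    G.dist u a = G.dist w a + 1 := by
  have hadjuw : G.Adj u w := by rw [← SimpleGraph.mem_neighborSet, hnbru]; right; rfl
  apply le_antisymm
  · have h1 : G.dist u w = 1 := SimpleGraph.dist_eq_one_iff_adj.mpr hadjuw
    have := hG.dist_triangle (u := u) (v := w) (w := a)
    omega
  · have key : ∀ n (p : G.Walk u a), p.length ≤ n → G.dist w a + 1 ≤ p.length := by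
      intro n
      induction n with
      | zero =>
        intro p hp
        have := SimpleGraph.Walk.eq_of_length_eq_zero (Nat.le_zero.mp hp)
        exact absurd this.symm hau
      | succ n ih =>
        intro p hp
        have hua : u ≠ a := fun h => hau h.symm
        obtain ⟨c, hc, q, rfl⟩ := SimpleGraph.Walk.exists_eq_cons_of_ne hua p
        have hcm : c = l ∨ c = w := by
          have h2 : c ∈ G.neighborSet u := hc
          rwa [hnbru] at h2
        rcases hcm with rfl | rfl
        · have hca : c ≠ a := fun h => ha h.symm
          obtain ⟨d, hd, r, rfl⟩ := SimpleGraph.Walk.exists_eq_cons_of_ne hca q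
          have hdu : d = u := eq_u_of_adj_l hl hd
          have hlen : (r.copy hdu rfl).length ≤ n := by
            simp only [SimpleGraph.Walk.length_copy]
            simp only [SimpleGraph.Walk.length_cons] at hp; omega
          have := ih (r.copy hdu rfl) hlen
          simp only [SimpleGraph.Walk.length_copy] at this
          simp only [SimpleGraph.Walk.length_cons]; omega
        · have h3 : G.dist c a ≤ q.length := SimpleGraph.dist_le q
          simp only [SimpleGraph.Walk.length_cons]; omega
    obtain ⟨p, hp⟩ := (hG u a).exists_walk_length_eq_dist
    have := key p.length p le_rfl
    omega

end PL2

namespace PL3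
open PLaux

variable {V : Type*}

lemma univ_srs {G : SimpleGraph V} : IsStrongResolvingSet G Set.univ := by
  intro p q hpq
  refine ⟨p, Set.mem_univ p, Or.inl ?_⟩
  show G.dist p p + G.dist p q = G.dist p q
  rw [SimpleGraph.dist_self, Nat.zero_add]

lemma cover_of_srs {G : SimpleGraph V} (hG : G.Connected) {W : Set V}
    (hW : IsStrongResolvingSet G W) :
    ∀ a b : V, a ≠ b → MaxDist G a b → MaxDist G b a → a ∈ W ∨ b ∈ W := by
  intro a b hab hma hmb
  by_contra hcon
  push_neg at hcon
  obtain ⟨x, hxW, hres⟩ := hW a b hab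
  have key : ∀ y z : V, MaxDist G y z → x ≠ y → ¬ LiesBetween G x y z := by
    intro y z hmd hxy hlb
    obtain ⟨p, hp⟩ := (hG y x).exists_walk_length_eq_dist
    have hyx : y ≠ x := hxy.symm
    obtain ⟨c, hcadj, q, rfl⟩ := SimpleGraph.Walk.exists_eq_cons_of_ne hyx p
    rw [SimpleGraph.Walk.length_cons] at hp
    have h1 : G.dist c x ≤ q.length := SimpleGraph.dist_le q
    have h3 := hmd c hcadj
    have h4 := hG.dist_triangle (u := x) (v := c) (w := z)
    have e1 : G.dist x y = G.dist y x := SimpleGraph.dist_comm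
    have e2 : G.dist x c = G.dist c x := SimpleGraph.dist_comm
    have hlb' : G.dist x y + G.dist y z = G.dist x z := hlb
    omega
  rcases hres with h | h
  · have hxa : x ≠ a := fun he => hcon.1 (he ▸ hxW)
    exact key a b hma hxa h
  · have hxb : x ≠ b := fun he => hcon.2 (he ▸ hxW)
    exact key b a hmb hxb h

lemma srs_of_cover [Fintype V] {G : SimpleGraph V} (hG : G.Connected) {W : Set V}
    (hW : ∀ a b : V, a ≠ b → MaxDist G a b → MaxDist G b a → a ∈ W ∨ b ∈ W) :
    IsStrongResolvingSet G W := by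
  classical
  intro a b hab
  set S : Finset V := Finset.univ.filter (fun x => G.dist x a + G.dist a b = G.dist x b) with hS
  have haS : a ∈ S := by simp [hS, SimpleGraph.dist_self]
  obtain ⟨p, hpS, hpmax⟩ := S.exists_max_image (fun x => G.dist x b) ⟨a, haS⟩
  rw [hS, Finset.mem_filter] at hpS
  have hpa : G.dist p a + G.dist a b = G.dist p b := hpS.2
  have hmdp : MaxDist G p b := by
    intro c hc
    by_contra hlt
    push_neg at hlt
    have hd1 : G.dist c p = 1 := SimpleGraph.dist_eq_one_iff_adj.mpr hc.symm
    have h1 := hG.dist_triangle (u := c) (v := p) (w := b)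
    have h2 := hG.dist_triangle (u := c) (v := p) (w := a)
    have h3 := hG.dist_triangle (u := c) (v := a) (w := b)
    have hcS : c ∈ S := by
      rw [hS, Finset.mem_filter]
      exact ⟨Finset.mem_univ c, by omega⟩
    have := hpmax c hcS
    omega
  set T : Finset V := Finset.univ.filter (fun y => G.dist p b + G.dist b y = G.dist p y) with hT
  have hbT : b ∈ T := by simp [hT, SimpleGraph.dist_self]
  obtain ⟨r, hrT, hrmax⟩ := T.exists_max_image (fun y => G.dist p y) ⟨b, hbT⟩
  rw [hT, Finset.mem_filter] at hrT
  have hrT2 : G.dist p b + G.dist b r = G.dist p r := hrT.2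
  have hmdr : MaxDist G r p := by
    intro c hc
    by_contra hlt
    push_neg at hlt
    have hd1 : G.dist r c = 1 := SimpleGraph.dist_eq_one_iff_adj.mpr hc
    have h1 := hG.dist_triangle (u := p) (v := r) (w := c)
    have h2 := hG.dist_triangle (u := p) (v := b) (w := c)
    have h3 := hG.dist_triangle (u := b) (v := r) (w := c)
    have e1 : G.dist c p = G.dist p c := SimpleGraph.dist_comm
    have e2 : G.dist r p = G.dist p r := SimpleGraph.dist_comm
    have hcT : c ∈ T := by
      rw [hT, Finset.mem_filter]
      exact ⟨Finset.mem_univ c, by omega⟩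
    have := hrmax c hcT
    omega
  have hmdpr : MaxDist G p r := by
    intro c hc
    have h1 := hG.dist_triangle (u := c) (v := b) (w := r)
    have h2 := hmdp c hc
    omega
  have hdab : 0 < G.dist a b := hG.pos_dist_of_ne hab
  have hpr : p ≠ r := by
    intro h
    rw [h] at hrT2
    rw [h] at hpa
    have : G.dist r r = 0 := SimpleGraph.dist_self
    omega
  have hres2 : LiesBetween G r b a := by
    have t1 := hG.dist_triangle (u := p) (v := a) (w := r)
    have t2 := hG.dist_triangle (u := a) (v := b) (w := r)
    have e1 : G.dist r b = G.dist b r := SimpleGraph.dist_comm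
    have e2 : G.dist b a = G.dist a b := SimpleGraph.dist_comm
    have e3 : G.dist r a = G.dist a r := SimpleGraph.dist_comm
    show G.dist r b + G.dist b a = G.dist r a
    omega
  rcases hW p r hpr hmdpr hmdr with h | h
  · exact ⟨p, h, Or.inl hpa⟩
  · exact ⟨r, h, Or.inr hres2⟩

end PL3


namespace PL4
open PLaux PL2

variable {V : Type*} {G : SimpleGraph V} {l u w : V}

lemma md_transfer (hG : G.Connected) (hl : G.neighborSet l = {u})
    {a b : ↥{x : V | x ≠ l}} (hau : a.1 ≠ u) :
    MaxDist (G.induce {x : V | x ≠ l}) a b ↔ MaxDist G a.1 b.1 := by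
  constructor
  · intro h c hc
    have hcl : c ≠ l := by
      intro hcl
      exact hau (eq_u_of_adj_l hl (hcl ▸ hc).symm)
    have := h ⟨c, hcl⟩ hc
    rwa [dist_induce hG hl, dist_induce hG hl] at this
  · intro h c hc
    have h2 := h c.1 hc
    rw [dist_induce hG hl, dist_induce hG hl]
    exact h2

lemma l_md (hG : G.Connected) (hl : G.neighborSet l = {u}) {a : V} (ha : a ≠ l) :
    MaxDist G l a := by
  intro c hc
  have hcu : c = u := eq_u_of_adj_l hl hc
  rw [hcu, dist_leaf hG hl ha]
  omega

lemma u_md' (hG : G.Connected) (hl : G.neighborSet l = {u}) (hul : u ≠ l)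
    (hnbru : G.neighborSet u = {l, w}) {a : ↥{x : V | x ≠ l}} (hau : a.1 ≠ u) :
    MaxDist (G.induce {x : V | x ≠ l}) ⟨u, hul⟩ a := by
  intro c hc
  have hcm : c.1 = l ∨ c.1 = w := by
    have h2 : c.1 ∈ G.neighborSet u := hc
    rwa [hnbru] at h2
  have hcw : c.1 = w := by
    rcases hcm with h | h
    · exact absurd h c.2
    · exact h
  rw [dist_induce hG hl, dist_induce hG hl, dist_mid hG hl hnbru a.2 hau, hcw]
  omega

lemma md_l_iff (hG : G.Connected) (hl : G.neighborSet l = {u}) (hul : u ≠ l)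
    {a : V} (ha : a ≠ l) (hau : a ≠ u) :
    MaxDist G a l ↔ MaxDist (G.induce {x : V | x ≠ l}) ⟨a, ha⟩ ⟨u, hul⟩ := by
  have key : ∀ x : V, x ≠ l → G.dist x l = G.dist x u + 1 := by
    intro x hx
    have e1 : G.dist x l = G.dist l x := SimpleGraph.dist_comm
    have e2 : G.dist x u = G.dist u x := SimpleGraph.dist_comm
    rw [e1, e2, dist_leaf hG hl hx]
  constructor
  · intro h c hc
    have h2 := h c.1 hc
    rw [key a ha, key c.1 c.2] at h2
    rw [dist_induce hG hl, dist_induce hG hl]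
    show G.dist c.1 u ≤ G.dist a u
    omega
  · intro h c hc
    have hcl : c ≠ l := by
      intro hcl
      exact hau (eq_u_of_adj_l hl (hcl ▸ hc).symm)
    have h2 := h ⟨c, hcl⟩ hc
    rw [dist_induce hG hl, dist_induce hG hl] at h2
    have h3 : G.dist c u ≤ G.dist a u := h2
    rw [key a ha, key c hcl]
    omega

lemma not_u_md (hG : G.Connected) (hl : G.neighborSet l = {u}) (hul : u ≠ l)
    (hnbru : G.neighborSet u = {l, w}) (hwl : w ≠ l) {a : V} (ha : a ≠ u) :
    ¬ MaxDist G u a := by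
  intro h
  by_cases hal : a = l
  · subst hal
    have hadjuw : G.Adj u w := by
      rw [← SimpleGraph.mem_neighborSet, hnbru]; right; rfl
    have h2 := h w hadjuw
    have h3 : G.dist u a = 1 := SimpleGraph.dist_eq_one_iff_adj.mpr (adj_of_leaf hl).symm
    have h4 : G.dist w a = G.dist a w := SimpleGraph.dist_comm
    have h5 : G.dist a w = G.dist u w + 1 := dist_leaf hG hl hwl
    have h6 : G.dist u w = 1 := SimpleGraph.dist_eq_one_iff_adj.mpr hadjuw
    omega
  · have h2 := h l (adj_of_leaf hl).symm
    rw [dist_leaf hG hl hal] at h2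
    omega

end PL4


open PLaux PL2 PL3 PL4 in
/-- Removing a peripheral leaf (a leaf whose unique neighbor has degree 2) of a connected
graph does not change the strong metric dimension. -/
theorem sdim_remove_peripheral_leaf {V : Type*} [Fintype V]
    (G : SimpleGraph V) (hG : G.Connected) (h2 : 2 ≤ Fintype.card V)
    (l u : V) (hl : G.neighborSet l = {u}) (hu : (G.neighborSet u).ncard = 2) :
    sdim (G.induce {x | x ≠ l}) = sdim G := by
  classical
  have hul : u ≠ l := by
    intro h
    have h3 := adj_of_leaf hl
    rw [h] at h3
    exact G.irrefl h3
  obtain ⟨w, hwl, hnbru⟩ : ∃ w, w ≠ l ∧ G.neighborSet u = {l, w} := by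
    obtain ⟨x, y, hxy, hset⟩ := Set.ncard_eq_two.mp hu
    have hlmem : l ∈ G.neighborSet u := (adj_of_leaf hl).symm
    rw [hset] at hlmem
    rcases hlmem with h | h
    · exact ⟨y, fun hh => hxy (h.symm.trans hh.symm), by rw [hset, ← h]⟩
    · exact ⟨x, fun hh => hxy (hh.trans h), by rw [hset, ← h, Set.pair_comm]⟩
  have hG' : (G.induce {x : V | x ≠ l}).Connected := connected_induce hG hl hul
  have hne1 : {n | ∃ W : Set V, W.ncard = n ∧ IsStrongResolvingSet G W}.Nonempty :=
    ⟨_, Set.univ, rfl, univ_srs⟩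
  have hne2 : {n | ∃ W : Set ↥{x : V | x ≠ l}, W.ncard = n ∧
      IsStrongResolvingSet (G.induce {x : V | x ≠ l}) W}.Nonempty :=
    ⟨_, Set.univ, rfl, univ_srs⟩
  have hd1 : sdim (G.induce {x : V | x ≠ l}) ≤ sdim G := by
    obtain ⟨W, hWc, hWs⟩ := Nat.sInf_mem hne1
    have hcov := cover_of_srs hG hWs
    set f : V → ↥{x : V | x ≠ l} := fun x => if h : x = l then ⟨u, hul⟩ else ⟨x, h⟩ with hf
    have hfa : ∀ x : ↥{x : V | x ≠ l}, f x.1 = x := by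
      intro x
      have : (x.1 : V) ≠ l := x.2
      simp only [hf, dif_neg this]
    have hfl : f l = ⟨u, hul⟩ := by simp [hf]
    have hsrs' : IsStrongResolvingSet (G.induce {x : V | x ≠ l}) (f '' W) := by
      apply srs_of_cover hG'
      intro a b hab hma hmb
      by_cases hau : a.1 = u
      · have hbu : b.1 ≠ u := fun h => hab (Subtype.ext (hau.trans h.symm))
        have haeq : a = ⟨u, hul⟩ := Subtype.ext hau
        rw [haeq] at hmb
        have hmd : MaxDist G b.1 l := (md_l_iff hG hl hul b.2 hbu).mpr hmb
        have hld : MaxDist G l b.1 := l_md hG hl b.2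
        rcases hcov b.1 l b.2 hmd hld with h | h
        · exact Or.inr ⟨b.1, h, hfa b⟩
        · exact Or.inl ⟨l, h, by rw [hfl, haeq]⟩
      · by_cases hbu : b.1 = u
        · have hbeq : b = ⟨u, hul⟩ := Subtype.ext hbu
          rw [hbeq] at hma
          have hmd : MaxDist G a.1 l := (md_l_iff hG hl hul a.2 hau).mpr hma
          have hld : MaxDist G l a.1 := l_md hG hl a.2
          rcases hcov a.1 l a.2 hmd hld with h | h
          · exact Or.inl ⟨a.1, h, hfa a⟩
          · exact Or.inr ⟨l, h, by rw [hfl, hbeq]⟩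
        · have h1 : MaxDist G a.1 b.1 := (md_transfer hG hl hau).mp hma
          have h2 : MaxDist G b.1 a.1 := (md_transfer hG hl hbu).mp hmb
          have hne : a.1 ≠ b.1 := fun h => hab (Subtype.ext h)
          rcases hcov a.1 b.1 hne h1 h2 with h | h
          · exact Or.inl ⟨a.1, h, hfa a⟩
          · exact Or.inr ⟨b.1, h, hfa b⟩
    have hle : sdim (G.induce {x : V | x ≠ l}) ≤ (f '' W).ncard :=
      Nat.sInf_le ⟨f '' W, rfl, hsrs'⟩
    have hle2 : (f '' W).ncard ≤ W.ncard := Set.ncard_image_le (Set.toFinite W)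
    have hsd : sdim G = sInf {n | ∃ W : Set V, W.ncard = n ∧ IsStrongResolvingSet G W} := rfl
    omega
  have hd2 : sdim G ≤ sdim (G.induce {x : V | x ≠ l}) := by
    obtain ⟨W', hWc, hWs⟩ := Nat.sInf_mem hne2
    have hcov := cover_of_srs hG' hWs
    set g : ↥{x : V | x ≠ l} → V := fun x => if x.1 = u then l else x.1 with hg
    have hgu : g ⟨u, hul⟩ = l := by simp [hg]
    have hgx : ∀ (x : V) (hx : x ∈ {x : V | x ≠ l}), x ≠ u → g ⟨x, hx⟩ = x := by
      intro x hx hxu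
      simp [hg, hxu]
    have hsrs : IsStrongResolvingSet G (g '' W') := by
      apply srs_of_cover hG
      intro a b hab hma hmb
      by_cases hal : a = l
      · rw [hal] at hma hmb hab ⊢
        have hbl : b ≠ l := fun h => hab h.symm
        have hbu : b ≠ u := by
          intro h
          exact not_u_md hG hl hul hnbru hwl hul.symm (h ▸ hmb)
        have h1 : MaxDist (G.induce {x : V | x ≠ l}) ⟨b, hbl⟩ ⟨u, hul⟩ :=
          (md_l_iff hG hl hul hbl hbu).mp hmb
        have h2 : MaxDist (G.induce {x : V | x ≠ l}) ⟨u, hul⟩ ⟨b, hbl⟩ :=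
          u_md' hG hl hul hnbru hbu
        have hne : (⟨b, hbl⟩ : ↥{x : V | x ≠ l}) ≠ ⟨u, hul⟩ :=
          fun h => hbu (congrArg Subtype.val h)
        rcases hcov _ _ hne h1 h2 with h | h
        · exact Or.inr ⟨_, h, hgx b hbl hbu⟩
        · exact Or.inl ⟨_, h, hgu⟩
      · by_cases hbl : b = l
        · rw [hbl] at hma hmb hab ⊢
          have hau : a ≠ u := by
            intro h
            exact not_u_md hG hl hul hnbru hwl hul.symm (h ▸ hma)
          have h1 : MaxDist (G.induce {x : V | x ≠ l}) ⟨a, hal⟩ ⟨u, hul⟩ :=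
            (md_l_iff hG hl hul hal hau).mp hma
          have h2 : MaxDist (G.induce {x : V | x ≠ l}) ⟨u, hul⟩ ⟨a, hal⟩ :=
            u_md' hG hl hul hnbru hau
          have hne : (⟨a, hal⟩ : ↥{x : V | x ≠ l}) ≠ ⟨u, hul⟩ :=
            fun h => hau (congrArg Subtype.val h)
          rcases hcov _ _ hne h1 h2 with h | h
          · exact Or.inl ⟨_, h, hgx a hal hau⟩
          · exact Or.inr ⟨_, h, hgu⟩
        · have hau : a ≠ u := by
            intro h
            exact not_u_md hG hl hul hnbru hwl
              (fun hh => hab (h.trans hh.symm)) (h ▸ hma)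
          have hbu : b ≠ u := by
            intro h
            exact not_u_md hG hl hul hnbru hwl
              (fun hh => hab.symm (h.trans hh.symm)) (h ▸ hmb)
          have h1 : MaxDist (G.induce {x : V | x ≠ l}) ⟨a, hal⟩ ⟨b, hbl⟩ :=
            (md_transfer hG hl hau).mpr hma
          have h2 : MaxDist (G.induce {x : V | x ≠ l}) ⟨b, hbl⟩ ⟨a, hal⟩ :=
            (md_transfer hG hl hbu).mpr hmb
          have hne : (⟨a, hal⟩ : ↥{x : V | x ≠ l}) ≠ ⟨b, hbl⟩ :=
            fun h => hab (congrArg Subtype.val h)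
          rcases hcov _ _ hne h1 h2 with h | h
          · exact Or.inl ⟨_, h, hgx a hal hau⟩
          · exact Or.inr ⟨_, h, hgx b hbl hbu⟩
    have hle : sdim G ≤ (g '' W').ncard := Nat.sInf_le ⟨g '' W', rfl, hsrs⟩
    have hle2 : (g '' W').ncard ≤ W'.ncard := Set.ncard_image_le (Set.toFinite W')
    have hsd : sdim (G.induce {x : V | x ≠ l}) = sInf {n | ∃ W : Set ↥{x : V | x ≠ l},
      W.ncard = n ∧ IsStrongResolvingSet (G.induce {x : V | x ≠ l}) W} := rfl
    omega
  exact le_antisymm hd1 hd2
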